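/- If orthonormalization is used, centralized and federated vertical subspace iteration are equivalent: let A be an m×N real matrix with columns indexed by the sigma type N = (s : Fin S) × Fin (n s). Define the centralized iterates by H_i := the matrix whose columns are gramSchmidtNormed applied to the columns of A * G_{i−1}, and G_i := the matrix whose columns are gramSchmidtNormed applied to the columns of Aᵀ * H_i. Suppose the federated iterates satisfy: H̃_i is the matrix whose columns are gramSchmidtNormed applied to the columns of Σ_s A^s * G̃^s_{i−1}, and the blocks G̃_i^s are obtained from (A^s)ᵀ * H̃_i by the federated Gram-Schmidt recursion with aggregated residuals and aggregated norms. If G̃^s_0 equals the site-s row-block of G_0 for all s, and at every iteration the column families being orthonormalized are linearly independent, then for all i ≥ 1 and all s: H̃_i = H_i and G̃_i^s equals the site-s row-block of G_i. -/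

import Mathlib

open Matrix
open scoped RealInnerProductSpace

/-- Helper instance (provable from Mathlib) so that `gramSchmidtNormed` elaborates for
families indexed by `Fin k`. -/
instance finChainWellFoundedLT (k : ℕ) :
    @IsWellFounded (Fin k) (fun a b => @LT.lt _ (@Preorder.toLT _ (@PartialOrder.toPreorder _
      (@SemilatticeInf.toPartialOrder _ (@Lattice.toSemilatticeInf _
        (@DistribLattice.toLattice _ (@instDistribLatticeOfLinearOrder _
          Fin.instLinearOrder)))))) a b) :=
  inferInstanceAs (WellFoundedLT (Fin k))

/-- The `j`-th column of a matrix, viewed as a vector in Euclidean space. -/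
def col {a b : Type*} (M : Matrix a b ℝ) (j : b) : EuclideanSpace ℝ a :=
  WithLp.toLp 2 (fun r => M r j)

/-- Glue site-local vectors into one vector on the sigma type. -/
def glue {S : ℕ} {n : Fin S → ℕ} (w : (s : Fin S) → EuclideanSpace ℝ (Fin (n s))) :
    EuclideanSpace ℝ ((s : Fin S) × Fin (n s)) :=
  WithLp.toLp 2 (fun (p : (s : Fin S) × Fin (n s)) => w p.1 p.2)

lemma inner_glue {S : ℕ} {n : Fin S → ℕ}
    (w w' : (s : Fin S) → EuclideanSpace ℝ (Fin (n s))) :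
    ⟪glue w, glue w'⟫ = ∑ s : Fin S, ⟪w s, w' s⟫ := by
  simp only [glue, PiLp.inner_apply, RCLike.inner_apply, conj_trivial]
  rw [← Finset.univ_sigma_univ, Finset.sum_sigma]


lemma esum_apply {α β : Type*} [Fintype β] (s : Finset α)
    (f : α → EuclideanSpace ℝ β) (b : β) : (∑ a ∈ s, f a) b = ∑ a ∈ s, f a b := by
  induction s using Finset.cons_induction with
  | empty => rfl
  | cons a s ha ih => rw [Finset.sum_cons, Finset.sum_cons, PiLp.add_apply, ih]

lemma sqrt_inner_self {E : Type*} [NormedAddCommGroup E] [InnerProductSpace ℝ E] (v : E) :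
    Real.sqrt ⟪v, v⟫ = ‖v‖ := by
  rw [real_inner_self_eq_norm_sq, Real.sqrt_sq (norm_nonneg v)]


/-- Proposition 1: if orthonormalization is used, centralized and federated vertical
subspace iteration are equivalent.  Centralized iterates: `H_{i+1}` orthonormalizes
(via `gramSchmidtNormed`) the columns of `A * G_i` and `G_{i+1}` orthonormalizes the
columns of `Aᵀ * H_{i+1}`.  Federated iterates: `H̃_{i+1}` orthonormalizes the columns of
`Σ_s A^s * G̃_i^s`, and the blocks `G̃_{i+1}^s` are obtained from `(A^s)ᵀ * H̃_{i+1}` by the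
federated Gram-Schmidt recursion with aggregated residuals and aggregated norms.  If the
initial blocks agree and all column families being orthonormalized are linearly
independent, then for all `i ≥ 1` the iterates agree: `H̃_i = H_i` and `G̃_i^s` is the
site-`s` row-block of `G_i`. -/
theorem federated_subspace_iteration_eq_centralized (S m k : ℕ) (n : Fin S → ℕ)
    (A : Matrix (Fin m) ((s : Fin S) × Fin (n s)) ℝ)
    (H : ℕ → Matrix (Fin m) (Fin k) ℝ)
    (G : ℕ → Matrix ((s : Fin S) × Fin (n s)) (Fin k) ℝ)
    (Ht : ℕ → Matrix (Fin m) (Fin k) ℝ)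
    (Gt : ℕ → (s : Fin S) → Matrix (Fin (n s)) (Fin k) ℝ)
    -- centralized recurrences
    (hH : ∀ (i : ℕ) (r : Fin m) (c : Fin k), H (i + 1) r c =
      InnerProductSpace.gramSchmidtNormed ℝ (_root_.col (A * G i)) c r)
    (hG : ∀ (i : ℕ) (p : (s : Fin S) × Fin (n s)) (c : Fin k), G (i + 1) p c =
      InnerProductSpace.gramSchmidtNormed ℝ (_root_.col (Aᵀ * H (i + 1))) c p)
    -- federated H-update
    (hHt : ∀ (i : ℕ) (r : Fin m) (c : Fin k), Ht (i + 1) r c =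
      InnerProductSpace.gramSchmidtNormed ℝ
        (_root_.col (∑ s : Fin S, (A.submatrix id (Sigma.mk s)) * Gt i s)) c r)
    -- federated G-update: federated Gram-Schmidt recursion with aggregated residuals
    -- and aggregated norms, applied to the columns of `(A^s)ᵀ * H̃_{i+1}`
    (hGt : ∀ i : ℕ, ∃ u : Fin k → (s : Fin S) → EuclideanSpace ℝ (Fin (n s)),
      (∀ (j : Fin k) (s : Fin S), u j s =
       _root_.col ((A.submatrix id (Sigma.mk s))ᵀ * Ht (i + 1)) j -
          ∑ l ∈ Finset.Iio j,
            ((∑ t : Fin S, ⟪u l t,_root_.col ((A.submatrix id (Sigma.mk t))ᵀ * Ht (i + 1)) j⟫) /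
              (∑ t : Fin S, ⟪u l t, u l t⟫)) • u l s) ∧
      (∀ (s : Fin S) (p : Fin (n s)) (c : Fin k), Gt (i + 1) s p c =
        (1 / Real.sqrt (∑ t : Fin S, ⟪u c t, u c t⟫)) * u c s p))
    -- the column families being orthonormalized are linearly independent
    (hLI1 : ∀ i : ℕ, LinearIndependent ℝ (_root_.col (A * G i)))
    (hLI2 : ∀ i : ℕ, LinearIndependent ℝ (_root_.col (Aᵀ * H (i + 1))))
    -- initialization with identical blocks
    (hinit : ∀ s : Fin S, Gt 0 s = (G 0).submatrix (Sigma.mk s) id) :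
    ∀ i : ℕ, 1 ≤ i →
      Ht i = H i ∧ ∀ s : Fin S, Gt i s = (G i).submatrix (Sigma.mk s) id := by
  have key : ∀ i : ℕ, (∀ s, Gt i s = (G i).submatrix (Sigma.mk s) id) →
      Ht (i + 1) = H (i + 1) ∧
        ∀ s, Gt (i + 1) s = (G (i + 1)).submatrix (Sigma.mk s) id := by
    intro i hi
    have hsum : (∑ s : Fin S, (A.submatrix id (Sigma.mk s)) * Gt i s) = A * G i := by
      ext r c
      simp only [Matrix.sum_apply, Matrix.mul_apply, hi, Matrix.submatrix_apply, id]
      rw [← Finset.univ_sigma_univ, Finset.sum_sigma]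
    have hHeq : Ht (i + 1) = H (i + 1) := by
      ext r c; rw [hHt, hH, hsum]
    obtain ⟨u, hu, hGt'⟩ := hGt i
    set f : Fin k → EuclideanSpace ℝ ((s : Fin S) × Fin (n s)) :=
      _root_.col (Aᵀ * H (i + 1)) with hf
    have hfblock : ∀ (j : Fin k) (t : Fin S),
        _root_.col ((A.submatrix id (Sigma.mk t))ᵀ * Ht (i + 1)) j = WithLp.toLp 2 (fun p => f j ⟨t, p⟩) := by
      intro j t
      ext p
      simp only [hf, _root_.col, Matrix.mul_apply, Matrix.transpose_apply,
        Matrix.submatrix_apply, hHeq, id]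
    have hinner : ∀ (w : (s : Fin S) → EuclideanSpace ℝ (Fin (n s))) (j : Fin k),
        (∑ t : Fin S, ⟪w t, _root_.col ((A.submatrix id (Sigma.mk t))ᵀ * Ht (i + 1)) j⟫) =
          ⟪glue w, f j⟫ := by
      intro w j
      have h0 : f j = glue (fun t => WithLp.toLp 2 (fun p => f j ⟨t, p⟩)) := rfl
      rw [h0, inner_glue]
      exact Finset.sum_congr rfl fun t _ => by rw [hfblock]
    have hglue : ∀ j : Fin k, glue (u j) = InnerProductSpace.gramSchmidt ℝ f j := by
      intro j
      induction j using WellFoundedLT.induction with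
      | _ j ih =>
        have step : glue (u j) = f j - ∑ l ∈ Finset.Iio j,
            ((⟪glue (u l), f j⟫) / (⟪glue (u l), glue (u l)⟫)) • glue (u l) := by
          ext p
          have h1 := congrArg (fun v => v p.2) (hu j p.1)
          rw [PiLp.sub_apply, esum_apply] at h1
          simp only [PiLp.smul_apply, smul_eq_mul] at h1
          show u j p.1 p.2 = _
          rw [h1, hfblock]
          rw [PiLp.sub_apply, esum_apply]
          simp only [PiLp.smul_apply, smul_eq_mul]
          congr 1
          refine Finset.sum_congr rfl fun l _ => ?_
          rw [hinner (u l) j, ← inner_glue (u l) (u l)]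
          rfl
        rw [step, InnerProductSpace.gramSchmidt_def]
        congr 1
        refine Finset.sum_congr rfl fun l hl => ?_
        rw [Submodule.starProjection_singleton, ← ih l (Finset.mem_Iio.mp hl),
          real_inner_self_eq_norm_sq]
        norm_num
    refine ⟨hHeq, fun s => ?_⟩
    ext p c
    rw [hGt' s p c, Matrix.submatrix_apply]
    simp only [id_eq]
    rw [hG i ⟨s, p⟩ c]
    have h3 : (∑ t : Fin S, ⟪u c t, u c t⟫) = ⟪glue (u c), glue (u c)⟫ :=
      (inner_glue (u c) (u c)).symm
    rw [h3, sqrt_inner_self, hglue c]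
    simp only [InnerProductSpace.gramSchmidtNormed, PiLp.smul_apply, smul_eq_mul, one_div]
    congr 1
    exact congrArg (fun v => v ⟨s, p⟩) (hglue c)
  have blocks : ∀ i : ℕ, ∀ s, Gt i s = (G i).submatrix (Sigma.mk s) id := by
    intro i
    induction i with
    | zero => exact hinit
    | succ j ih => exact (key j ih).2
  intro i hi
  obtain ⟨j, rfl⟩ := Nat.exists_eq_add_of_le' hi
  exact ⟨(key j (blocks j)).1, blocks (j + 1)⟩
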